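/- The derivative z′(β) of z(β) = log Z(β) satisfies 0 ≤ z′(β) ≤ n for every real β. Moreover, if α ≥ βmin and Z(α) ≥ e²·Z(βmin), then z′(α) ≥ 1 − e^{−2}. Consequently, if βmin ≤ α ≤ βmax and Z(α) ≥ e²·Z(βmin), then z′(βmax) ≤ 2n·z′(α). -/

import Mathlib

/-- Partition function of a continuous Gibbs distribution with counts `c`
(finite support): `Z(β) = ∑_x c(x)·e^{βx}`. -/
noncomputable def gibbsZ (c : ℝ → ℝ) (hc : (Function.support c).Finite) (β : ℝ) : ℝ :=
  ∑ x ∈ hc.toFinset, c x * Real.exp (β * x)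

/-- Log partition function `z(β) = log Z(β)`. -/
noncomputable def gibbsLogZ (c : ℝ → ℝ) (hc : (Function.support c).Finite) (β : ℝ) : ℝ :=
  Real.log (gibbsZ c hc β)

/-- The derivative `z′` of `z(β) = log Z(β)` satisfies `0 ≤ z′(β) ≤ n` for all
`β`.  Moreover, if `α ≥ βmin` and `Z(α) ≥ e²·Z(βmin)` then
`z′(α) ≥ 1 − e^{−2}`; consequently, if `βmin ≤ α ≤ βmax` and
`Z(α) ≥ e²·Z(βmin)`, then `z′(βmax) ≤ 2n·z′(α)`. -/
theorem stmt_8 (n : ℝ) (hn : 1 ≤ n) (c : ℝ → ℝ) (hc : (Function.support c).Finite)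
    (hsupp : Function.support c ⊆ {0} ∪ Set.Icc 1 n)
    (hnonneg : ∀ x, 0 ≤ c x) (hne : c ≠ 0)
    (βmin βmax : ℝ) (hββ : βmin ≤ βmax) :
    (∀ β : ℝ, 0 ≤ deriv (gibbsLogZ c hc) β ∧ deriv (gibbsLogZ c hc) β ≤ n)
    ∧ (∀ α : ℝ, βmin ≤ α → Real.exp 2 * gibbsZ c hc βmin ≤ gibbsZ c hc α →
        1 - Real.exp (-2) ≤ deriv (gibbsLogZ c hc) α)
    ∧ (∀ α : ℝ, βmin ≤ α → α ≤ βmax → Real.exp 2 * gibbsZ c hc βmin ≤ gibbsZ c hc α →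
        deriv (gibbsLogZ c hc) βmax ≤ 2 * n * deriv (gibbsLogZ c hc) α) := by
  classical
  set W : ℝ → ℝ := fun β => ∑ x ∈ hc.toFinset, c x * x * Real.exp (β * x) with hW
  -- membership facts
  have hmem : ∀ x ∈ hc.toFinset, 0 ≤ x ∧ x ≤ n := by
    intro x hx
    have hx' : x ∈ Function.support c := hc.mem_toFinset.mp hx
    rcases hsupp hx' with h | h
    · simp only [Set.mem_singleton_iff] at h
      subst h; exact ⟨le_refl 0, le_trans zero_le_one hn⟩
    · exact ⟨le_trans zero_le_one h.1, h.2⟩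
  -- positivity of Z
  have hZpos : ∀ β, 0 < gibbsZ c hc β := by
    intro β
    obtain ⟨x, hx⟩ := Function.ne_iff.mp hne
    have hxp : 0 < c x := lt_of_le_of_ne (hnonneg x) (Ne.symm hx)
    refine Finset.sum_pos' (fun y _ => mul_nonneg (hnonneg y) (Real.exp_pos _).le)
      ⟨x, hc.mem_toFinset.mpr hx, mul_pos hxp (Real.exp_pos _)⟩
  -- derivative of Z
  have hZd : ∀ β, HasDerivAt (gibbsZ c hc) (W β) β := by
    intro β
    have h : HasDerivAt (fun b => ∑ x ∈ hc.toFinset, c x * Real.exp (b * x))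
        (∑ x ∈ hc.toFinset, c x * (Real.exp (β * x) * x)) β := by
      refine HasDerivAt.fun_sum (fun x _ => ?_)
      simpa using (((hasDerivAt_id β).mul_const x).exp.const_mul (c x))
    have heq : (∑ x ∈ hc.toFinset, c x * (Real.exp (β * x) * x)) = W β := by
      simp only [hW]; apply Finset.sum_congr rfl; intro x _; ring
    rw [heq] at h
    exact h
  -- derivative of log Z
  have hderiv : ∀ β, deriv (gibbsLogZ c hc) β = W β / gibbsZ c hc β := by
    intro β
    have h : HasDerivAt (gibbsLogZ c hc) (W β / gibbsZ c hc β) β :=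
      (hZd β).log (ne_of_gt (hZpos β))
    exact h.deriv
  have hWnonneg : ∀ β, 0 ≤ W β := by
    intro β
    refine Finset.sum_nonneg (fun x hx => ?_)
    have := (hmem x hx).1
    have := hnonneg x
    positivity
  have hWle : ∀ β, W β ≤ n * gibbsZ c hc β := by
    intro β
    rw [gibbsZ, Finset.mul_sum]
    refine Finset.sum_le_sum (fun x hx => ?_)
    have h1 := (hmem x hx).2
    calc c x * x * Real.exp (β * x) = (c x * Real.exp (β * x)) * x := by ring
      _ ≤ (c x * Real.exp (β * x)) * n := by
          refine mul_le_mul_of_nonneg_left h1 ?_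
          exact mul_nonneg (hnonneg x) (Real.exp_pos _).le
      _ = n * (c x * Real.exp (β * x)) := by ring
  -- part 1
  have part1 : ∀ β : ℝ, 0 ≤ deriv (gibbsLogZ c hc) β ∧ deriv (gibbsLogZ c hc) β ≤ n := by
    intro β
    rw [hderiv β]
    constructor
    · exact div_nonneg (hWnonneg β) (hZpos β).le
    · rw [div_le_iff₀ (hZpos β)]
      linarith [hWle β]
  -- c 0 ≤ Z βmin
  have hc0Z : c 0 ≤ gibbsZ c hc βmin := by
    by_cases h0 : c 0 = 0
    · rw [h0]; exact (hZpos βmin).le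
    · have hmem0 : (0 : ℝ) ∈ hc.toFinset := hc.mem_toFinset.mpr h0
      calc c 0 = c 0 * Real.exp (βmin * 0) := by simp
        _ ≤ gibbsZ c hc βmin := by
            refine Finset.single_le_sum (f := fun x => c x * Real.exp (βmin * x))
              (fun x _ => ?_) hmem0
            have := hnonneg x; positivity
  -- Z α ≤ W α + c 0
  have hkey : ∀ α : ℝ, gibbsZ c hc α ≤ W α + c 0 := by
    intro α
    have hle : gibbsZ c hc α ≤ ∑ x ∈ hc.toFinset,
        (c x * x * Real.exp (α * x) + (if x = 0 then c 0 else 0)) := by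
      refine Finset.sum_le_sum (fun x hx => ?_)
      by_cases h0 : x = 0
      · subst h0; simp
      · have h1 : (1:ℝ) ≤ x := by
          have hx' : x ∈ Function.support c := hc.mem_toFinset.mp hx
          rcases hsupp hx' with h | h
          · exact absurd h h0
          · exact h.1
        simp only [h0, if_false, add_zero]
        calc c x * Real.exp (α * x) = (c x * Real.exp (α * x)) * 1 := by ring
          _ ≤ (c x * Real.exp (α * x)) * x := by
              refine mul_le_mul_of_nonneg_left h1 ?_
              exact mul_nonneg (hnonneg x) (Real.exp_pos _).le
          _ = c x * x * Real.exp (α * x) := by ring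
    rw [Finset.sum_add_distrib, Finset.sum_ite_eq' hc.toFinset 0 (fun _ => c 0)] at hle
    refine le_trans hle ?_
    by_cases h0 : (0:ℝ) ∈ hc.toFinset <;> simp [h0, hnonneg 0, hW]
  -- part 2
  have part2 : ∀ α : ℝ, βmin ≤ α → Real.exp 2 * gibbsZ c hc βmin ≤ gibbsZ c hc α →
      1 - Real.exp (-2) ≤ deriv (gibbsLogZ c hc) α := by
    intro α _ hZ
    rw [hderiv α, le_div_iff₀ (hZpos α)]
    have h1 : gibbsZ c hc βmin ≤ Real.exp (-2) * gibbsZ c hc α := by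
      have := mul_le_mul_of_nonneg_left hZ (Real.exp_pos (-2)).le
      rwa [← mul_assoc, ← Real.exp_add, neg_add_cancel, Real.exp_zero, one_mul] at this
    have h2 := hkey α
    linarith
  refine ⟨part1, part2, ?_⟩
  intro α hα1 hα2 hZ
  have hd1 := (part1 βmax).2
  have hd2 := part2 α hα1 hZ
  have he : Real.exp (-2) ≤ 1/2 := by
    rw [Real.exp_neg]
    rw [inv_le_comm₀ (Real.exp_pos 2) (by norm_num)]
    have := Real.add_one_le_exp (2:ℝ)
    linarith
  have hn0 : (0:ℝ) < n := lt_of_lt_of_le zero_lt_one hn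
  nlinarith [hd2, hd1]
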